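/- Let G=(V,E) be a locally finite graph with symmetric positive edge weights, μ(x) ≥ μ_min > 0, h satisfying (H1) and (H2), f satisfying (F1), (F2), (F3) with f(x,s)=0 for s ≤ 0, and g ∈ ℋ'. Then there exists ε₁ > 0 such that for every ε with 0 < ε < ε₁ there are constants r_ε > 0 and δ_ε > 0 with J_ε(u) ≥ δ_ε for all u ∈ ℋ with (1/2)r_ε ≤ ‖u‖_ℋ ≤ 2r_ε; moreover r_ε can be chosen so that r_ε → 0 as ε → 0. -/

import Mathlib

open Filter Topology

namespace GraphNLE

variable {V : Type*}

/-- Integral of `g` over `V` w.r.t. the measure `μ`: `∫_V g dμ = Σ_x μ(x) g(x)`. -/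
noncomputable def intV (μ g : V → ℝ) : ℝ := ∑' x, μ x * g x

/-- The graph (μ-)Laplacian: `Δu(x) = (1/μ(x)) Σ_{y} w_{xy} (u(y)-u(x))`. -/
noncomputable def lap (w : V → V → ℝ) (μ u : V → ℝ) (x : V) : ℝ :=
  (1 / μ x) * ∑' y, w x y * (u y - u x)

/-- Squared length of the gradient: `|∇u|²(x) = (1/(2μ(x))) Σ_y w_{xy} (u(y)-u(x))²`. -/
noncomputable def gradSq (w : V → V → ℝ) (μ u : V → ℝ) (x : V) : ℝ :=
  (1 / (2 * μ x)) * ∑' y, w x y * (u y - u x) ^ 2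

/-- The gradient form `Γ(u,v)(x) = (1/(2μ(x))) Σ_y w_{xy} (u(y)-u(x))(v(y)-v(x))`. -/
noncomputable def gamma (w : V → V → ℝ) (μ u v : V → ℝ) (x : V) : ℝ :=
  (1 / (2 * μ x)) * ∑' y, w x y * (u y - u x) * (v y - v x)

/-- Membership in `W^{1,2}(V)`: finite `∫(|∇u|² + u²) dμ`. -/
def memW (w : V → V → ℝ) (μ u : V → ℝ) : Prop :=
  Summable (fun x => μ x * gradSq w μ u x) ∧ Summable (fun x => μ x * u x ^ 2)

/-- The `W^{1,2}` norm `(∫_V (|∇u|² + u²) dμ)^{1/2}`. -/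
noncomputable def normW (w : V → V → ℝ) (μ u : V → ℝ) : ℝ :=
  Real.sqrt (intV μ fun x => gradSq w μ u x + u x ^ 2)

/-- Membership in the space `ℋ`: finite `∫(|∇u|² + h u²) dμ`. -/
def memH (w : V → V → ℝ) (μ h u : V → ℝ) : Prop :=
  Summable (fun x => μ x * gradSq w μ u x) ∧ Summable (fun x => μ x * (h x * u x ^ 2))

/-- The norm of `ℋ`: `‖u‖_ℋ = (∫_V (|∇u|² + h u²) dμ)^{1/2}`. -/
noncomputable def normH (w : V → V → ℝ) (μ h u : V → ℝ) : ℝ :=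
  Real.sqrt (intV μ fun x => gradSq w μ u x + h x * u x ^ 2)

/-- The inner product of `ℋ`: `⟨u,v⟩_ℋ = ∫_V (Γ(u,v) + h u v) dμ`. -/
noncomputable def innerH (w : V → V → ℝ) (μ h u v : V → ℝ) : ℝ :=
  intV μ fun x => gamma w μ u v x + h x * u x * v x

/-- `λ₁ = inf { ∫(|∇u|² + h u²) dμ : u ∈ ℋ, ∫ u² dμ = 1 }`. -/
noncomputable def lambda1 (w : V → V → ℝ) (μ h : V → ℝ) : ℝ :=
  sInf {t : ℝ | ∃ u : V → ℝ, memH w μ h u ∧ intV μ (fun x => u x ^ 2) = 1 ∧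
    intV μ (fun x => gradSq w μ u x + h x * u x ^ 2) = t}

/-- The primitive `F(x,s) = ∫_0^s f(x,t) dt`. -/
noncomputable def Fint (f : V → ℝ → ℝ) (x : V) (s : ℝ) : ℝ := ∫ t in (0:ℝ)..s, f x t

/-- The functional `J(u) = (1/2)∫(|∇u|² + h u²) dμ − ∫ F(x,u) dμ`. -/
noncomputable def energy (w : V → V → ℝ) (μ h : V → ℝ) (f : V → ℝ → ℝ) (u : V → ℝ) : ℝ :=
  (1 / 2) * intV μ (fun x => gradSq w μ u x + h x * u x ^ 2) -
    intV μ (fun x => Fint f x (u x))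

/-- The perturbed functional `J_ε(u) = J(u) − ε ∫ g u dμ`. -/
noncomputable def energyP (w : V → V → ℝ) (μ h : V → ℝ) (f : V → ℝ → ℝ) (g : V → ℝ)
    (ε : ℝ) (u : V → ℝ) : ℝ :=
  energy w μ h f u - ε * intV μ (fun x => g x * u x)

/-- Weak convergence `u_k ⇀ u` in the Hilbert space `ℋ`. -/
def weakConvH (w : V → V → ℝ) (μ h : V → ℝ) (uk : ℕ → V → ℝ) (u : V → ℝ) : Prop :=
  ∀ v : V → ℝ, memH w μ h v →
    Tendsto (fun k => innerH w μ h (uk k) v) atTop (nhds (innerH w μ h u v))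

/-- The `L^q(V,μ)` norm for finite `q`. -/
noncomputable def LqNorm (μ : V → ℝ) (q : ℝ) (u : V → ℝ) : ℝ :=
  (intV μ fun x => |u x| ^ q) ^ (1 / q)

/-- The `L^∞(V)` norm `sup_x |u(x)|`. -/
noncomputable def LinfNorm (u : V → ℝ) : ℝ := ⨆ x, |u x|

/-- `g` (viewed via the pairing `u ↦ ∫ g u dμ`) belongs to the dual `ℋ'` of `ℋ`. -/
def memHdual (w : V → V → ℝ) (μ h g : V → ℝ) : Prop :=
  ∃ C : ℝ, ∀ u : V → ℝ, memH w μ h u →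
    Summable (fun x => μ x * (g x * u x)) ∧
    |intV μ fun x => g x * u x| ≤ C * normH w μ h u

/-- `u ∈ ℋ` is a weak solution of `−Δu + hu = f(x,u)`. -/
def weakSol (w : V → V → ℝ) (μ h : V → ℝ) (f : V → ℝ → ℝ) (u : V → ℝ) : Prop :=
  memH w μ h u ∧ ∀ φ : V → ℝ, memH w μ h φ →
    intV μ (fun x => gamma w μ u φ x + h x * u x * φ x) =
      intV μ (fun x => f x (u x) * φ x)

/-- `u ∈ ℋ` is a weak solution of the perturbed equation `−Δu + hu = f(x,u) + εg`. -/
def weakSolP (w : V → V → ℝ) (μ h : V → ℝ) (f : V → ℝ → ℝ) (g : V → ℝ) (ε : ℝ)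
    (u : V → ℝ) : Prop :=
  memH w μ h u ∧ ∀ φ : V → ℝ, memH w μ h φ →
    intV μ (fun x => gamma w μ u φ x + h x * u x * φ x) =
      intV μ (fun x => f x (u x) * φ x) + ε * intV μ (fun x => g x * φ x)

/-- The simple graph underlying the weights `w` (edges where the weight is nonzero). -/
def adjGraph (w : V → V → ℝ) : SimpleGraph V where
  Adj x y := x ≠ y ∧ (w x y ≠ 0 ∨ w y x ≠ 0)
  symm := ⟨fun x y hxy => ⟨hxy.1.symm, hxy.2.symm⟩⟩
  loopless := ⟨fun x hx => hx.1 rfl⟩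


lemma gradSq_nonneg (w : V → V → ℝ) (hwnn : ∀ x y, 0 ≤ w x y) (μ : V → ℝ)
    (hμ : ∀ x, 0 ≤ μ x) (u : V → ℝ) (x : V) : 0 ≤ gradSq w μ u x := by
  have := hμ x
  exact mul_nonneg (by positivity)
    (tsum_nonneg fun y => mul_nonneg (hwnn x y) (sq_nonneg _))

lemma gradSq_smul (w : V → V → ℝ) (μ u : V → ℝ) (t : ℝ) (x : V) :
    gradSq w μ (fun y => t * u y) x = t ^ 2 * gradSq w μ u x := by
  unfold gradSq
  rw [show (fun y => w x y * (t * u y - t * u x) ^ 2)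
      = fun y => t ^ 2 * (w x y * (u y - u x) ^ 2) from funext fun y => by ring,
    tsum_mul_left]
  ring

lemma summable_sq (μ h : V → ℝ) (hμ : ∀ x, 0 ≤ μ x) (h₀ : ℝ) (hh₀ : 0 < h₀)
    (hH1 : ∀ x, h₀ ≤ h x) (u : V → ℝ) (hs : Summable fun x => μ x * (h x * u x ^ 2)) :
    Summable fun x => μ x * u x ^ 2 := by
  refine Summable.of_nonneg_of_le (fun x => mul_nonneg (hμ x) (sq_nonneg _))
    (fun x => ?_) (hs.mul_left (1 / h₀))
  rw [one_div, ← div_eq_inv_mul, le_div_iff₀ hh₀]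
  nlinarith [mul_nonneg (sub_nonneg.mpr (hH1 x)) (mul_nonneg (hμ x) (sq_nonneg (u x)))]

lemma Fint_nonpos (f : V → ℝ → ℝ) (hfneg : ∀ x, ∀ s : ℝ, s ≤ 0 → f x s = 0)
    (x : V) (s : ℝ) (hs : s ≤ 0) : Fint f x s = 0 := by
  unfold Fint
  rw [intervalIntegral.integral_congr (g := fun _ => (0:ℝ)) ?_,
    intervalIntegral.integral_zero]
  intro t ht
  rw [Set.uIcc_of_ge hs] at ht
  exact hfneg x t ht.2

lemma scaled_mem (w : V → V → ℝ) (μ h : V → ℝ) (u : V → ℝ) (hu : memH w μ h u)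
    (hS : 0 < intV μ fun x => u x ^ 2) :
    ∃ v : V → ℝ, memH w μ h v ∧ intV μ (fun x => v x ^ 2) = 1 ∧
      intV μ (fun x => gradSq w μ v x + h x * v x ^ 2) =
        (intV μ fun x => gradSq w μ u x + h x * u x ^ 2) /
          (intV μ fun x => u x ^ 2) := by
  set S := intV μ fun x => u x ^ 2 with hSdef
  set t : ℝ := 1 / Real.sqrt S with htdef
  have hsq : Real.sqrt S ^ 2 = S := Real.sq_sqrt hS.le
  have ht2 : t ^ 2 = 1 / S := by rw [htdef, div_pow, one_pow, hsq]
  refine ⟨fun x => t * u x, ⟨?_, ?_⟩, ?_, ?_⟩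
  · have e : (fun x => μ x * gradSq w μ (fun y => t * u y) x)
        = fun x => t ^ 2 * (μ x * gradSq w μ u x) :=
      funext fun x => by rw [gradSq_smul]; ring
    rw [e]; exact hu.1.mul_left _
  · have e : (fun x => μ x * (h x * (t * u x) ^ 2))
        = fun x => t ^ 2 * (μ x * (h x * u x ^ 2)) := funext fun x => by ring
    rw [e]; exact hu.2.mul_left _
  · have e : ∀ x, μ x * (t * u x) ^ 2 = t ^ 2 * (μ x * u x ^ 2) := fun x => by ring
    have : intV μ (fun x => (t * u x) ^ 2) = t ^ 2 * S := by
      unfold intV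
      rw [tsum_congr e, tsum_mul_left]; rfl
    rw [this, ht2]; field_simp
  · have e : ∀ x, μ x * (gradSq w μ (fun y => t * u y) x + h x * (t * u x) ^ 2)
        = t ^ 2 * (μ x * (gradSq w μ u x + h x * u x ^ 2)) := fun x => by
      rw [gradSq_smul]; ring
    unfold intV
    rw [tsum_congr e, tsum_mul_left, ht2, one_div, ← div_eq_inv_mul]

lemma spectrum_bddBelow (w : V → V → ℝ) (hwnn : ∀ x y, 0 ≤ w x y) (μ h : V → ℝ)
    (hμ : ∀ x, 0 ≤ μ x) (hh : ∀ x, 0 ≤ h x) :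
    BddBelow {t : ℝ | ∃ u : V → ℝ, memH w μ h u ∧ intV μ (fun x => u x ^ 2) = 1 ∧
      intV μ (fun x => gradSq w μ u x + h x * u x ^ 2) = t} := by
  refine ⟨0, ?_⟩
  rintro s ⟨u, -, -, rfl⟩
  exact tsum_nonneg fun x => mul_nonneg (hμ x)
    (add_nonneg (gradSq_nonneg w hwnn μ hμ u x) (mul_nonneg (hh x) (sq_nonneg _)))

lemma poincare (w : V → V → ℝ) (hwnn : ∀ x y, 0 ≤ w x y) (μ h : V → ℝ)
    (hμ : ∀ x, 0 ≤ μ x) (hh : ∀ x, 0 ≤ h x) (u : V → ℝ) (hu : memH w μ h u) :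
    lambda1 w μ h * intV μ (fun x => u x ^ 2) ≤
      intV μ (fun x => gradSq w μ u x + h x * u x ^ 2) := by
  have hQ0 : 0 ≤ intV μ (fun x => gradSq w μ u x + h x * u x ^ 2) :=
    tsum_nonneg fun x => mul_nonneg (hμ x)
      (add_nonneg (gradSq_nonneg w hwnn μ hμ u x) (mul_nonneg (hh x) (sq_nonneg _)))
  have hS0 : 0 ≤ intV μ (fun x => u x ^ 2) :=
    tsum_nonneg fun x => mul_nonneg (hμ x) (sq_nonneg _)
  rcases hS0.eq_or_lt with hS | hS
  · rw [← hS, mul_zero]; exact hQ0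
  · obtain ⟨v, hv, hv1, hvq⟩ := scaled_mem w μ h u hu hS
    have hle : lambda1 w μ h ≤
        (intV μ fun x => gradSq w μ u x + h x * u x ^ 2) /
          (intV μ fun x => u x ^ 2) :=
      csInf_le (spectrum_bddBelow w hwnn μ h hμ hh) ⟨v, hv, hv1, hvq⟩
    exact (le_div_iff₀ hS).mp hle

set_option maxHeartbeats 2000000 in
theorem perturbed_mountain_pass_geometry
    (w : V → V → ℝ) (hsymm : ∀ x y, w x y = w y x) (hwnn : ∀ x y, 0 ≤ w x y)
    (hlf : ∀ x : V, {y | w x y ≠ 0}.Finite)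
    (μ : V → ℝ) (μmin : ℝ) (hμmin : 0 < μmin) (hμ : ∀ x, μmin ≤ μ x)
    (h : V → ℝ) (h₀ : ℝ) (hh₀ : 0 < h₀) (hH1 : ∀ x, h₀ ≤ h x)
    (hH2 : Summable fun x => μ x * (1 / h x))
    (f : V → ℝ → ℝ)
    (hF1c : ∀ x, Continuous (f x)) (hF10 : ∀ x, f x 0 = 0)
    (hF1b : ∀ M : ℝ, 0 < M → ∃ A : ℝ, ∀ x, ∀ s ∈ Set.Icc (0:ℝ) M, f x s ≤ A)
    (hF2 : ∃ θ : ℝ, 2 < θ ∧ ∀ x, ∀ s : ℝ, 0 < s →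
      0 < θ * Fint f x s ∧ θ * Fint f x s ≤ s * f x s)
    (hF3 : ∃ c : ℝ, c < lambda1 w μ h ∧ ∃ ρ : ℝ, 0 < ρ ∧
      ∀ x, ∀ s : ℝ, 0 < s → s < ρ → 2 * Fint f x s ≤ c * s ^ 2)
    (hfneg : ∀ x, ∀ s : ℝ, s ≤ 0 → f x s = 0)
    (g : V → ℝ) (hgdual : memHdual w μ h g) :
    ∃ ε₁ : ℝ, 0 < ε₁ ∧ ∃ r δ : ℝ → ℝ,
      (∀ ε : ℝ, 0 < ε → ε < ε₁ → 0 < r ε ∧ 0 < δ ε ∧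
        ∀ u : V → ℝ, memH w μ h u →
          r ε / 2 ≤ normH w μ h u → normH w μ h u ≤ 2 * r ε →
          δ ε ≤ energyP w μ h f g ε u) ∧
      Tendsto r (nhdsWithin 0 (Set.Ioi 0)) (nhds 0) := by
  classical
  obtain ⟨c, hclam, ρ, hρ, hF3'⟩ := hF3
  obtain ⟨θ, hθ, hF2'⟩ := hF2
  obtain ⟨C0, hgC⟩ := hgdual
  set C : ℝ := max C0 1 with hCdef
  have hC1 : 1 ≤ C := le_max_right _ _
  have hC0 : 0 < C := lt_of_lt_of_le one_pos hC1
  have hμ0 : ∀ x, (0:ℝ) ≤ μ x := fun x => (lt_of_lt_of_le hμmin (hμ x)).le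
  have hh0 : ∀ x, (0:ℝ) ≤ h x := fun x => (lt_of_lt_of_le hh₀ (hH1 x)).le
  by_cases hset : {t : ℝ | ∃ u : V → ℝ, memH w μ h u ∧ intV μ (fun x => u x ^ 2) = 1 ∧
      intV μ (fun x => gradSq w μ u x + h x * u x ^ 2) = t}.Nonempty
  · -- the spectral set is nonempty
    have hlam1 : h₀ ≤ lambda1 w μ h := by
      refine le_csInf hset ?_
      rintro s ⟨u, hu, hu1, rfl⟩
      have Su : Summable fun x => μ x * u x ^ 2 :=
        summable_sq μ h hμ0 h₀ hh₀ hH1 u hu.2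
      have SQ : Summable fun x => μ x * (gradSq w μ u x + h x * u x ^ 2) := by
        simpa [mul_add] using hu.1.add hu.2
      have step1 : (∑' x, h₀ * (μ x * u x ^ 2)) ≤
          ∑' x, μ x * (gradSq w μ u x + h x * u x ^ 2) := by
        refine Summable.tsum_le_tsum (fun x => ?_) (Su.mul_left h₀) SQ
        nlinarith [gradSq_nonneg w hwnn μ hμ0 u x, hμ0 x,
          mul_nonneg (sub_nonneg.mpr (hH1 x)) (mul_nonneg (hμ0 x) (sq_nonneg (u x)))]
      rw [tsum_mul_left] at step1
      have hu1' : (∑' x, μ x * u x ^ 2) = 1 := hu1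
      rw [hu1', mul_one] at step1
      exact step1
    have hlampos : 0 < lambda1 w μ h := lt_of_lt_of_le hh₀ hlam1
    set lam := lambda1 w μ h with hlam
    clear_value lam
    have hln : lam ≠ 0 := hlampos.ne'
    set c' : ℝ := max c 0 with hc'def
    have hc'0 : 0 ≤ c' := le_max_right _ _
    have hc' : c' < lam := max_lt hclam hlampos
    set α : ℝ := (lam - c') / (2 * lam) with hαdef
    have hα : 0 < α := div_pos (by linarith) (by linarith)
    have hα' : α ≠ 0 := hα.ne'
    set K : ℝ := (8 * C + 1) / α with hKdef
    have hK : 0 < K := div_pos (by linarith) hα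
    have hαK : α * K = 8 * C + 1 := by rw [hKdef]; field_simp
    have hm0 : 0 < μmin * h₀ := mul_pos hμmin hh₀
    have hsm : 0 < Real.sqrt (μmin * h₀) := Real.sqrt_pos.mpr hm0
    refine ⟨ρ * Real.sqrt (μmin * h₀) / (2 * K), div_pos (mul_pos hρ hsm) (by linarith),
      fun ε => K * ε, fun ε => K / 4 * ε ^ 2, ?_, ?_⟩
    · intro ε hε hεlt
      refine ⟨mul_pos hK hε, mul_pos (by linarith) (pow_pos hε 2), ?_⟩
      intro u hu hn1 hn2
      show K / 4 * ε ^ 2 ≤ energyP w μ h f g ε u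
      set Q : ℝ := intV μ (fun x => gradSq w μ u x + h x * u x ^ 2) with hQdef
      clear_value Q
      have hQ0' : 0 ≤ intV μ (fun x => gradSq w μ u x + h x * u x ^ 2) :=
        tsum_nonneg fun x => mul_nonneg (hμ0 x)
          (add_nonneg (gradSq_nonneg w hwnn μ hμ0 u x) (mul_nonneg (hh0 x) (sq_nonneg _)))
      have hQ0 : 0 ≤ Q := by rw [hQdef]; exact hQ0'
      have hn0 : 0 ≤ normH w μ h u := Real.sqrt_nonneg _
      have hn2Q : normH w μ h u ^ 2 = Q := by rw [hQdef]; exact Real.sq_sqrt hQ0'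
      have hn1' : K * ε / 2 ≤ normH w μ h u := hn1
      have hn2' : normH w μ h u ≤ 2 * (K * ε) := hn2
      have SQ : Summable fun x => μ x * (gradSq w μ u x + h x * u x ^ 2) := by
        simpa [mul_add] using hu.1.add hu.2
      have Su : Summable fun x => μ x * u x ^ 2 :=
        summable_sq μ h hμ0 h₀ hh₀ hH1 u hu.2
      have hεlt' : 2 * K * ε < ρ * Real.sqrt (μmin * h₀) := by
        rw [lt_div_iff₀ (by linarith : (0:ℝ) < 2 * K)] at hεlt
        linarith
      have hQlt : Q < ρ ^ 2 * (μmin * h₀) := by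
        have h1 : (ρ * Real.sqrt (μmin * h₀)) ^ 2 = ρ ^ 2 * (μmin * h₀) := by
          rw [mul_pow, Real.sq_sqrt hm0.le]
        nlinarith [hε, hK, hn0, hn2', hn2Q, hεlt', hsm, hρ]
      have hsup : ∀ x, u x < ρ := by
        intro x
        have t1 : μmin * h₀ * u x ^ 2 ≤ μ x * (gradSq w μ u x + h x * u x ^ 2) := by
          nlinarith [gradSq_nonneg w hwnn μ hμ0 u x, hμ0 x, sq_nonneg (u x),
            mul_nonneg (sub_nonneg.mpr (hμ x)) (mul_nonneg hh₀.le (sq_nonneg (u x))),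
            mul_nonneg (hμ0 x) (mul_nonneg (sub_nonneg.mpr (hH1 x)) (sq_nonneg (u x)))]
        have t3 : μ x * (gradSq w μ u x + h x * u x ^ 2) ≤ Q := by
          rw [hQdef]
          exact Summable.le_tsum SQ x fun y _ => mul_nonneg (hμ0 y)
            (add_nonneg (gradSq_nonneg w hwnn μ hμ0 u y) (mul_nonneg (hh0 y) (sq_nonneg _)))
        have h4 : μmin * h₀ * u x ^ 2 < μmin * h₀ * ρ ^ 2 := by
          linarith only [t1, t3, hQlt]
        have hux2 : u x ^ 2 < ρ ^ 2 := lt_of_mul_lt_mul_left h4 hm0.le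
        calc u x ≤ |u x| := le_abs_self _
        _ < ρ := by
          have habs : |u x| ^ 2 < ρ ^ 2 := by rwa [sq_abs]
          exact lt_of_pow_lt_pow_left₀ 2 hρ.le habs
      have hFle : ∀ x, 0 ≤ Fint f x (u x) ∧ Fint f x (u x) ≤ c' / 2 * u x ^ 2 := by
        intro x
        rcases le_or_gt (u x) 0 with hx | hx
        · rw [Fint_nonpos f hfneg x _ hx]
          exact ⟨le_refl 0, mul_nonneg (by linarith) (sq_nonneg _)⟩
        · have h3 := hF3' x (u x) hx (hsup x)
          have h2 := (hF2' x (u x) hx).1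
          have hcc' : c * u x ^ 2 ≤ c' * u x ^ 2 :=
            mul_le_mul_of_nonneg_right (le_max_left _ _) (sq_nonneg _)
          have hθ0 : (0:ℝ) < θ := by linarith
          have hF0 : 0 < Fint f x (u x) := by
            rcases mul_pos_iff.mp h2 with ⟨-, hh⟩ | ⟨hh, -⟩
            · exact hh
            · linarith
          exact ⟨hF0.le, by linarith only [h3, hcc']⟩
      have SF : Summable fun x => μ x * Fint f x (u x) := by
        refine Summable.of_nonneg_of_le
          (fun x => mul_nonneg (hμ0 x) (hFle x).1) (fun x => ?_) (Su.mul_left (c' / 2))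
        calc μ x * Fint f x (u x) ≤ μ x * (c' / 2 * u x ^ 2) :=
          mul_le_mul_of_nonneg_left (hFle x).2 (hμ0 x)
        _ = c' / 2 * (μ x * u x ^ 2) := by ring
      have hIF : intV μ (fun x => Fint f x (u x)) ≤ c' / 2 * intV μ (fun x => u x ^ 2) := by
        have hst : (∑' x, μ x * Fint f x (u x)) ≤ ∑' x, c' / 2 * (μ x * u x ^ 2) := by
          refine Summable.tsum_le_tsum (fun x => ?_) SF (Su.mul_left _)
          calc μ x * Fint f x (u x) ≤ μ x * (c' / 2 * u x ^ 2) :=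
            mul_le_mul_of_nonneg_left (hFle x).2 (hμ0 x)
          _ = c' / 2 * (μ x * u x ^ 2) := by ring
        rw [tsum_mul_left] at hst
        exact hst
      have hpoin : lam * intV μ (fun x => u x ^ 2) ≤ Q := by
        rw [hQdef, hlam]
        exact poincare w hwnn μ h hμ0 hh0 u hu
      have hIF2 : intV μ (fun x => Fint f x (u x)) ≤ c' / (2 * lam) * Q := by
        have h1 : intV μ (fun x => u x ^ 2) ≤ Q / lam := by
          rw [le_div_iff₀ hlampos]
          linarith [hpoin]
        have h2 : c' / 2 * intV μ (fun x => u x ^ 2) ≤ c' / 2 * (Q / lam) :=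
          mul_le_mul_of_nonneg_left h1 (by linarith)
        have h3 : c' / 2 * (Q / lam) = c' / (2 * lam) * Q := by
          field_simp
        linarith
      have hIG : ε * intV μ (fun x => g x * u x) ≤ ε * (C * (2 * (K * ε))) := by
        have h1 := (hgC u hu).2
        have h2 : intV μ (fun x => g x * u x) ≤ C * (2 * (K * ε)) := by
          calc intV μ (fun x => g x * u x) ≤ |intV μ fun x => g x * u x| := le_abs_self _
          _ ≤ C0 * normH w μ h u := h1
          _ ≤ C * normH w μ h u := mul_le_mul_of_nonneg_right (le_max_left _ _) hn0
          _ ≤ C * (2 * (K * ε)) := mul_le_mul_of_nonneg_left hn2' hC0.le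
        exact mul_le_mul_of_nonneg_left h2 hε.le
      have hQn : α * (K * ε / 2) ^ 2 ≤ α * Q := by
        have hq : (K * ε / 2) ^ 2 ≤ Q := by nlinarith [hn1', hn0, hn2Q]
        exact mul_le_mul_of_nonneg_left hq hα.le
      have hhalf : α * Q ≤ 1 / 2 * Q - intV μ (fun x => Fint f x (u x)) := by
        have he : 1 / 2 * Q - c' / (2 * lam) * Q = α * Q := by
          rw [hαdef]
          field_simp
        linarith
      have key : α * (K * ε / 2) ^ 2 - ε * (C * (2 * (K * ε))) = K / 4 * ε ^ 2 := by
        linear_combination (K * ε ^ 2 / 4) * hαK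
      have hEP : energyP w μ h f g ε u =
          1 / 2 * Q - intV μ (fun x => Fint f x (u x)) - ε * intV μ (fun x => g x * u x) := by
        rw [hQdef]
        rfl
      rw [hEP]
      linarith
    · have h1 : Tendsto (fun ε : ℝ => K * ε) (nhds 0) (nhds (K * 0)) :=
        (continuous_const.mul continuous_id).tendsto 0
      rw [mul_zero] at h1
      exact h1.mono_left nhdsWithin_le_nhds
  · -- the spectral set is empty: every u ∈ ℋ is zero
    refine ⟨1, one_pos, id, fun _ => 1, ?_, tendsto_id.mono_left nhdsWithin_le_nhds⟩
    intro ε hε hε1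
    refine ⟨hε, one_pos, ?_⟩
    intro u hu hn1 hn2
    exfalso
    have Su : Summable fun x => μ x * u x ^ 2 := summable_sq μ h hμ0 h₀ hh₀ hH1 u hu.2
    have hSuV : intV μ (fun x => u x ^ 2) = 0 := by
      by_contra hne
      have hS0 : 0 ≤ intV μ (fun x => u x ^ 2) :=
        tsum_nonneg fun x => mul_nonneg (hμ0 x) (sq_nonneg _)
      obtain ⟨v, hv1, hv2, hv3⟩ := scaled_mem w μ h u hu (lt_of_le_of_ne hS0 (Ne.symm hne))
      exact hset ⟨_, v, hv1, hv2, hv3⟩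
    have hz : ∀ x, u x = 0 := by
      intro x
      have hle := Summable.le_tsum Su x fun y _ => mul_nonneg (hμ0 y) (sq_nonneg _)
      have h2 : (∑' y, μ y * u y ^ 2) = 0 := hSuV
      have hμx : 0 < μ x := lt_of_lt_of_le hμmin (hμ x)
      have h3 : u x ^ 2 = 0 := by nlinarith [hle, h2, hμx, sq_nonneg (u x)]
      exact pow_eq_zero_iff (by norm_num : (2:ℕ) ≠ 0) |>.mp h3
    have hnz : normH w μ h u = 0 := by
      unfold normH intV
      have e : ∀ x, μ x * (gradSq w μ u x + h x * u x ^ 2) = 0 := by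
        intro x
        have hg : gradSq w μ u x = 0 := by
          unfold gradSq
          rw [show (fun y => w x y * (u y - u x) ^ 2) = fun _ => (0:ℝ)
            from funext fun y => by rw [hz y, hz x]; ring, tsum_zero, mul_zero]
        rw [hg, hz x]
        ring
      rw [tsum_congr e, tsum_zero, Real.sqrt_zero]
    have hn1' : ε / 2 ≤ normH w μ h u := hn1
    rw [hnz] at hn1'
    linarith

end GraphNLE
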